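/- Let f : [a,b] → ℝ be a mapping such that the (n−1)-th derivative f^(n−1) (n ≥ 1) is absolutely continuous on [a,b], let p > 1 and q satisfy 1/p + 1/q = 1, and suppose |f^(n)|^q is concave on [a,b]. Then for all x ∈ [a,b]: | ∫_a^b f(t) dt − Σ_{k=0}^{n−1} (1/(k+1)!) [ (x−a)^{k+1} f^(k)(a) + (−1)^k (b−x)^{k+1} f^(k)(b) ] | ≤ ((b−a)^{1/q} / n!) ( ((x−a)^{np+1} + (b−x)^{np+1}) / (np+1) )^{1/p} | f^(n)((a+b)/2) |. -/

import Mathlib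

open MeasureTheory Set intervalIntegral

set_option maxHeartbeats 1000000

lemma key_identity (f : ℝ → ℝ) (a b x : ℝ) (hab : a ≤ b) (n : ℕ) (hn : 1 ≤ n)
    (hderiv : ∀ k < n, ∀ t ∈ Icc a b,
      HasDerivAt (iteratedDeriv k f) (iteratedDeriv (k + 1) f t) t)
    (hint : ∀ m ≤ n, IntervalIntegrable (iteratedDeriv m f) volume a b) :
    (∫ t in a..b, f t) -
      ∑ k ∈ Finset.range n, (1 / (Nat.factorial (k + 1) : ℝ)) *
        ((x - a) ^ (k + 1) * iteratedDeriv k f a +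
          (-1 : ℝ) ^ k * (b - x) ^ (k + 1) * iteratedDeriv k f b)
      = (1 / (Nat.factorial n : ℝ)) * ∫ t in a..b, (x - t) ^ n * iteratedDeriv n f t := by
  induction n, hn using Nat.le_induction with
  | base =>
    have hu : ∀ t ∈ uIcc a b, HasDerivAt (fun y => x - y) (-1 : ℝ) t := fun t _ => by
      simpa using (hasDerivAt_id t).const_sub x
    have hv : ∀ t ∈ uIcc a b, HasDerivAt (iteratedDeriv 0 f) (iteratedDeriv 1 f t) t := by
      rw [uIcc_of_le hab]; exact hderiv 0 one_pos
    have ibp := integral_mul_deriv_eq_deriv_mul hu hv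
      (intervalIntegrable_const) (hint 1 le_rfl)
    simp only [iteratedDeriv_zero] at ibp ⊢
    have : ∫ t in a..b, (x - t) ^ 1 * iteratedDeriv 1 f t
        = (x - b) * f b - (x - a) * f a - ∫ t in a..b, (-1 : ℝ) * f t := by
      simpa [iteratedDeriv_zero] using ibp
    rw [this, intervalIntegral.integral_const_mul]
    simp [Finset.sum_range_one]
    ring
  | succ m hm ih =>
    have hderiv' : ∀ k < m, ∀ t ∈ Icc a b,
        HasDerivAt (iteratedDeriv k f) (iteratedDeriv (k + 1) f t) t :=
      fun k hk => hderiv k (hk.trans (Nat.lt_succ_self m))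
    have hint' : ∀ k ≤ m, IntervalIntegrable (iteratedDeriv k f) volume a b :=
      fun k hk => hint k (hk.trans (Nat.le_succ m))
    have IH := ih hderiv' hint'
    have hu : ∀ t ∈ uIcc a b, HasDerivAt (fun y => (x - y) ^ (m + 1))
        (((m + 1 : ℕ) : ℝ) * (x - t) ^ m * (-1)) t := fun t _ => by
      simpa using ((hasDerivAt_id t).const_sub x).fun_pow (m + 1)
    have hv : ∀ t ∈ uIcc a b, HasDerivAt (iteratedDeriv m f) (iteratedDeriv (m + 1) f t) t := by
      rw [uIcc_of_le hab]; exact hderiv m (Nat.lt_succ_self m)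
    have hu' : IntervalIntegrable (fun t => ((m + 1 : ℕ) : ℝ) * (x - t) ^ m * (-1)) volume a b :=
      (Continuous.intervalIntegrable (by continuity) a b)
    have ibp := integral_mul_deriv_eq_deriv_mul hu hv hu' (hint (m + 1) le_rfl)
    have hscal : ∫ t in a..b, ((m + 1 : ℕ) : ℝ) * (x - t) ^ m * (-1) * iteratedDeriv m f t
        = (-((m : ℝ) + 1)) * ∫ t in a..b, (x - t) ^ m * iteratedDeriv m f t := by
      rw [← intervalIntegral.integral_const_mul]
      congr 1; funext t; push_cast; ring
    rw [hscal] at ibp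
    rw [Finset.sum_range_succ]
    have hfact : (Nat.factorial (m + 1) : ℝ) = ((m : ℝ) + 1) * (Nat.factorial m : ℝ) := by
      rw [Nat.factorial_succ]; push_cast; ring
    have hfne : (Nat.factorial m : ℝ) ≠ 0 := Nat.cast_ne_zero.mpr (Nat.factorial_ne_zero m)
    have hmne : ((m : ℝ) + 1) ≠ 0 := by positivity
    have hsign : (x - b) ^ (m + 1) = -((-1 : ℝ) ^ m * (b - x) ^ (m + 1)) := by
      have : x - b = -(b - x) := by ring
      rw [this, neg_pow, pow_succ]; ring
    rw [sub_add_eq_sub_sub, IH, ibp, hsign, hfact]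
    field_simp
    ring

/-- **Theorem (concave case).** If `f^(n-1)` (`n ≥ 1`) is absolutely continuous on `[a, b]`,
`p > 1`, `1/p + 1/q = 1`, and `|f^(n)|^q` is concave on `[a, b]`, then for all `x ∈ [a, b]`,
`|∫_a^b f - ∑_{k=0}^{n-1} (1/(k+1)!) [(x-a)^{k+1} f^(k)(a) + (-1)^k (b-x)^{k+1} f^(k)(b)]|
  ≤ ((b-a)^{1/q}/n!) (((x-a)^{np+1} + (b-x)^{np+1})/(np+1))^{1/p} |f^(n)((a+b)/2)|`. -/
theorem abs_integral_sub_sum_le_of_concaveOn_rpow_abs_iteratedDeriv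
    (f : ℝ → ℝ) (a b : ℝ) (hab : a < b) (n : ℕ) (hn : 1 ≤ n)
    (p q : ℝ) (hp : 1 < p) (hpq : 1 / p + 1 / q = 1)
    (hderiv : ∀ k < n, ∀ t ∈ Icc a b,
      HasDerivAt (iteratedDeriv k f) (iteratedDeriv (k + 1) f t) t)
    (hint : IntervalIntegrable (iteratedDeriv n f) volume a b)
    (hconc : ConcaveOn ℝ (Icc a b) (fun t => |iteratedDeriv n f t| ^ q))
    (x : ℝ) (hx : x ∈ Icc a b) :
    |(∫ t in a..b, f t) -
      ∑ k ∈ Finset.range n, (1 / (Nat.factorial (k + 1) : ℝ)) *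
        ((x - a) ^ (k + 1) * iteratedDeriv k f a +
          (-1 : ℝ) ^ k * (b - x) ^ (k + 1) * iteratedDeriv k f b)| ≤
      ((b - a) ^ (1 / q) / (Nat.factorial n : ℝ)) *
        (((x - a) ^ ((n : ℝ) * p + 1) + (b - x) ^ ((n : ℝ) * p + 1)) / ((n : ℝ) * p + 1))
          ^ (1 / p) *
        |iteratedDeriv n f ((a + b) / 2)| := by
  have hpq' : Real.HolderConjugate p q := Real.holderConjugate_iff.mpr ⟨hp, by simpa [one_div] using hpq⟩
  have hq : 1 < q := hpq'.symm.lt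
  have hq0 : 0 < q := hpq'.symm.pos
  have hp0 : 0 < p := hpq'.pos
  set g := iteratedDeriv n f with hgdef
  set m0 := (a + b) / 2 with hm0def
  have hm0 : m0 ∈ Icc a b := ⟨by simp only [hm0def]; linarith, by simp only [hm0def]; linarith⟩
  have habs : ∀ y : ℝ, (|y| ^ q) ^ (1 / q) = |y| := fun y => by
    rw [← Real.rpow_mul (abs_nonneg y), mul_one_div_cancel hq0.ne', Real.rpow_one]
  -- pointwise concavity bound
  have hptw : ∀ t ∈ Icc a b, |g t| ^ q + |g (a + b - t)| ^ q ≤ 2 * |g m0| ^ q := by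
    intro t ht
    have ht2 : a + b - t ∈ Icc a b := ⟨by linarith [ht.2], by linarith [ht.1]⟩
    have h2 := hconc.2 ht ht2 (by norm_num : (0:ℝ) ≤ 1/2) (by norm_num : (0:ℝ) ≤ 1/2)
      (by norm_num)
    have hpt : (1/2 : ℝ) • t + (1/2 : ℝ) • (a + b - t) = m0 := by
      simp only [smul_eq_mul, hm0def]; ring
    rw [hpt] at h2
    simp only [smul_eq_mul] at h2
    linarith
  have hbound : ∀ t ∈ Icc a b, |g t| ^ q ≤ 2 * |g m0| ^ q := by
    intro t ht
    have := hptw t ht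
    have h3 : (0:ℝ) ≤ |g (a + b - t)| ^ q := Real.rpow_nonneg (abs_nonneg _) _
    linarith
  have hgI : IntegrableOn g (Ioc a b) volume := hint.1
  haveI : IsFiniteMeasure (volume.restrict (Ioc a b)) :=
    ⟨by rw [Measure.restrict_apply_univ, Real.volume_Ioc]; exact ENNReal.ofReal_lt_top⟩
  have hgmem : MemLp g (ENNReal.ofReal q) (volume.restrict (Ioc a b)) := by
    apply MemLp.of_bound hgI.aestronglyMeasurable ((2 * |g m0| ^ q) ^ (1 / q))
    filter_upwards [ae_restrict_mem measurableSet_Ioc] with t ht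
    rw [Real.norm_eq_abs, ← habs (g t)]
    exact Real.rpow_le_rpow (Real.rpow_nonneg (abs_nonneg _) _)
      (hbound t (Ioc_subset_Icc_self ht)) (by positivity)
  have hKcont : Continuous (fun t : ℝ => (x - t) ^ n) := by continuity
  have hKmem : MemLp (fun t : ℝ => (x - t) ^ n) (ENNReal.ofReal p) (volume.restrict (Ioc a b)) := by
    apply MemLp.of_bound hKcont.aestronglyMeasurable.restrict ((b - a) ^ n)
    filter_upwards [ae_restrict_mem measurableSet_Ioc] with t ht
    rw [Real.norm_eq_abs, abs_pow]
    apply pow_le_pow_left₀ (abs_nonneg _)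
    rw [abs_le]
    constructor
    · linarith [hx.1, ht.2]
    · linarith [hx.2, ht.1]
  have holder := MeasureTheory.integral_mul_norm_le_Lp_mul_Lq hpq' hKmem hgmem
  -- integrability of |g|^q
  have hq_int' : Integrable (fun t => ‖g t‖ ^ q) (volume.restrict (Ioc a b)) := by
    have h := hgmem.integrable_norm_rpow (by simp [ENNReal.ofReal_eq_zero]; linarith)
      ENNReal.ofReal_ne_top
    simpa [ENNReal.toReal_ofReal hq0.le] using h
  have hII : IntervalIntegrable (fun t => |g t| ^ q) volume a b := by
    rw [intervalIntegrable_iff_integrableOn_Ioc_of_le hab.le]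
    simpa [Real.norm_eq_abs, IntegrableOn] using hq_int'
  have hII2 : IntervalIntegrable (fun t => |g (a + b - t)| ^ q) volume a b := by
    have h := (hII.comp_sub_left (a + b)).symm
    simpa using h
  have hrefl : (∫ t in a..b, |g (a + b - t)| ^ q) = ∫ t in a..b, |g t| ^ q := by
    rw [intervalIntegral.integral_comp_sub_left (fun s => |g s| ^ q) (a + b)]
    norm_num
  have hmono : (∫ t in a..b, (|g t| ^ q + |g (a + b - t)| ^ q))
      ≤ ∫ _t in a..b, (2 * |g m0| ^ q) :=
    intervalIntegral.integral_mono_on hab.le (hII.add hII2) intervalIntegrable_const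
      (fun t ht => hptw t ht)
  have hkey : (∫ t in a..b, |g t| ^ q) ≤ (b - a) * |g m0| ^ q := by
    rw [intervalIntegral.integral_add hII hII2, hrefl] at hmono
    rw [intervalIntegral.integral_const, smul_eq_mul] at hmono
    linarith
  -- kernel integral
  have hc : (0:ℝ) ≤ (n : ℝ) * p := by positivity
  have hKp : (∫ t in Ioc a b, ‖(x - t) ^ n‖ ^ p)
      = ((x - a) ^ ((n : ℝ) * p + 1) + (b - x) ^ ((n : ℝ) * p + 1)) / ((n : ℝ) * p + 1) := by
    have heq : ∀ t : ℝ, ‖(x - t) ^ n‖ ^ p = |x - t| ^ ((n : ℝ) * p) := fun t => by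
      rw [Real.norm_eq_abs, abs_pow, ← Real.rpow_natCast |x - t| n,
        ← Real.rpow_mul (abs_nonneg _)]
    simp only [heq]
    rw [← intervalIntegral.integral_of_le hab.le]
    have hrc : Continuous (fun s : ℝ => |s| ^ ((n : ℝ) * p)) := by
      apply Continuous.comp (g := fun s : ℝ => s ^ ((n : ℝ) * p))
      · exact continuous_iff_continuousAt.mpr fun s =>
          Real.continuousAt_rpow_const s _ (Or.inr hc)
      · exact continuous_abs
    have hcont : Continuous (fun t : ℝ => |x - t| ^ ((n : ℝ) * p)) :=
      hrc.comp (continuous_const.sub continuous_id)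
    rw [← intervalIntegral.integral_add_adjacent_intervals
      (hcont.intervalIntegrable a x) (hcont.intervalIntegrable x b)]
    have h1 : (∫ t in a..x, |x - t| ^ ((n : ℝ) * p))
        = (x - a) ^ ((n : ℝ) * p + 1) / ((n : ℝ) * p + 1) := by
      rw [show (fun t => |x - t| ^ ((n : ℝ) * p)) = fun t => (fun s => |s| ^ ((n : ℝ) * p)) (x - t)
        from rfl, intervalIntegral.integral_comp_sub_left (fun s => |s| ^ ((n : ℝ) * p)) x,
        sub_self]
      rw [intervalIntegral.integral_congr (g := fun s => s ^ ((n : ℝ) * p))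
        (fun s hs => by
          rw [uIcc_of_le (by linarith [hx.1] : (0:ℝ) ≤ x - a)] at hs
          simp [abs_of_nonneg hs.1])]
      rw [integral_rpow (Or.inl (by linarith : (-1:ℝ) < (n : ℝ) * p))]
      rw [Real.zero_rpow (by positivity : ((n : ℝ) * p + 1) ≠ 0)]
      ring
    have h2 : (∫ t in x..b, |x - t| ^ ((n : ℝ) * p))
        = (b - x) ^ ((n : ℝ) * p + 1) / ((n : ℝ) * p + 1) := by
      rw [show (fun t => |x - t| ^ ((n : ℝ) * p)) = fun t => (fun s => |s| ^ ((n : ℝ) * p)) (t - x)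
        from by funext t; rw [abs_sub_comm],
        intervalIntegral.integral_comp_sub_right (fun s => |s| ^ ((n : ℝ) * p)) x,
        sub_self]
      rw [intervalIntegral.integral_congr (g := fun s => s ^ ((n : ℝ) * p))
        (fun s hs => by
          rw [uIcc_of_le (by linarith [hx.2] : (0:ℝ) ≤ b - x)] at hs
          simp [abs_of_nonneg hs.1])]
      rw [integral_rpow (Or.inl (by linarith : (-1:ℝ) < (n : ℝ) * p))]
      rw [Real.zero_rpow (by positivity : ((n : ℝ) * p + 1) ≠ 0)]
      ring
    rw [h1, h2]
    ring
  -- Jensen / Hermite-Hadamard step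
  have hS : (∫ t in Ioc a b, ‖g t‖ ^ q) ^ (1 / q) ≤ (b - a) ^ (1 / q) * |g m0| := by
    have h1 : (∫ t in Ioc a b, ‖g t‖ ^ q) = ∫ t in a..b, |g t| ^ q := by
      rw [← intervalIntegral.integral_of_le hab.le]
      simp [Real.norm_eq_abs]
    rw [h1]
    calc (∫ t in a..b, |g t| ^ q) ^ (1 / q)
        ≤ ((b - a) * |g m0| ^ q) ^ (1 / q) :=
          Real.rpow_le_rpow
            (intervalIntegral.integral_nonneg hab.le
              (fun t _ => Real.rpow_nonneg (abs_nonneg _) _))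
            hkey (by positivity)
      _ = (b - a) ^ (1 / q) * |g m0| := by
          rw [Real.mul_rpow (by linarith) (Real.rpow_nonneg (abs_nonneg _) _), habs]
  -- assemble
  have hintall : ∀ m ≤ n, IntervalIntegrable (iteratedDeriv m f) volume a b := by
    intro m hm
    rcases eq_or_lt_of_le hm with rfl | h
    · exact hint
    · apply ContinuousOn.intervalIntegrable
      rw [uIcc_of_le hab.le]
      exact fun t ht => ((hderiv m h t ht).continuousAt).continuousWithinAt
  have hid := key_identity f a b x hab.le n hn hderiv hintall
  rw [hid]
  have hfn : (0:ℝ) < (Nat.factorial n : ℝ) := by positivity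
  have hKnn : (0:ℝ) ≤ (∫ t in Ioc a b, ‖(x - t) ^ n‖ ^ p) ^ (1 / p) :=
    Real.rpow_nonneg (integral_nonneg fun t => Real.rpow_nonneg (norm_nonneg _) _) _
  calc |1 / (Nat.factorial n : ℝ) * ∫ t in a..b, (x - t) ^ n * g t|
      = 1 / (Nat.factorial n : ℝ) * |∫ t in a..b, (x - t) ^ n * g t| := by
        rw [abs_mul, abs_of_nonneg (by positivity : (0:ℝ) ≤ 1 / (Nat.factorial n : ℝ))]
    _ ≤ 1 / (Nat.factorial n : ℝ) * ∫ t in a..b, ‖(x - t) ^ n‖ * ‖g t‖ := by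
        apply mul_le_mul_of_nonneg_left _ (by positivity)
        simpa [Real.norm_eq_abs, abs_mul] using intervalIntegral.norm_integral_le_integral_norm
          (f := fun t => (x - t) ^ n * g t) (μ := volume) (a := a) (b := b) hab.le
    _ = 1 / (Nat.factorial n : ℝ) * ∫ t in Ioc a b, ‖(x - t) ^ n‖ * ‖g t‖ := by
        rw [intervalIntegral.integral_of_le hab.le]
    _ ≤ 1 / (Nat.factorial n : ℝ) *
        ((∫ t in Ioc a b, ‖(x - t) ^ n‖ ^ p) ^ (1 / p) * (∫ t in Ioc a b, ‖g t‖ ^ q) ^ (1 / q)) :=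
        mul_le_mul_of_nonneg_left holder (by positivity)
    _ ≤ 1 / (Nat.factorial n : ℝ) *
        ((∫ t in Ioc a b, ‖(x - t) ^ n‖ ^ p) ^ (1 / p) * ((b - a) ^ (1 / q) * |g m0|)) := by
        apply mul_le_mul_of_nonneg_left _ (by positivity)
        exact mul_le_mul_of_nonneg_left hS hKnn
    _ = ((b - a) ^ (1 / q) / (Nat.factorial n : ℝ)) *
        (((x - a) ^ ((n : ℝ) * p + 1) + (b - x) ^ ((n : ℝ) * p + 1)) / ((n : ℝ) * p + 1))
          ^ (1 / p) * |g m0| := by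
        rw [hKp]; ring
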